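/- arXiv:2212.05568 — 9 statements merged into one kernel-verified Lean document; each statement's English description precedes it below -/
import Mathlib

section
/- Let λ ≤ λ_O be reals and E_O > 0. Let z, 𝕳 : ℝ → ℝ with z differentiable and 𝕳 continuous on [λ, λ_O], satisfying z'(λ') = −E_O(1+z(λ'))²𝕳(λ') for all λ' ∈ [λ, λ_O], z(λ_O) = 0, and 1 + z(λ') > 0 on [λ, λ_O]. Then (1/2)·(1 − (1+z(λ))^{−2}) = E_O ∫_λ^{λ_O} 𝕳(λ')/(1+z(λ')) dλ' (eq. (13) of the paper). -/
open intervalIntegral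

/-- Eq. (13) of the paper: integrating the redshift evolution equation
`z' = −E_O(1+z)²𝕳` with `z(λ_O) = 0` yields
`(1 − (1+z(λ))⁻²)/2 = E_O ∫_λ^{λ_O} 𝕳/(1+z) dλ'`. -/
theorem milne_redshift_integral_identity
    (lam lamO : ℝ) (hle : lam ≤ lamO)
    (EO : ℝ) (hEO : 0 < EO)
    (z H : ℝ → ℝ)
    (hz : ∀ lam' ∈ Set.Icc lam lamO,
      HasDerivAt z (-EO * (1 + z lam') ^ 2 * H lam') lam')
    (hH : ContinuousOn H (Set.Icc lam lamO))
    (hzO : z lamO = 0)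
    (hzpos : ∀ lam' ∈ Set.Icc lam lamO, 0 < 1 + z lam') :
    (1 - ((1 + z lam) ^ 2)⁻¹) / 2
      = EO * ∫ lam' in lam..lamO, H lam' / (1 + z lam') := by
  have huIcc : Set.uIcc lam lamO = Set.Icc lam lamO := Set.uIcc_of_le hle
  have hzc : ContinuousOn z (Set.Icc lam lamO) := fun x hx =>
    (hz x hx).continuousAt.continuousWithinAt
  have key : ∀ x ∈ Set.uIcc lam lamO,
      HasDerivAt (fun t => ((1 + z t) ^ 2)⁻¹ / 2) (EO * (H x / (1 + z x))) x := by
    intro x hx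
    rw [huIcc] at hx
    have h1 : HasDerivAt (fun t => 1 + z t) (-EO * (1 + z x) ^ 2 * H x) x :=
      (hz x hx).const_add 1
    have hne : (1 + z x) ≠ 0 := (hzpos x hx).ne'
    have h2 := ((h1.pow 2).inv (pow_ne_zero 2 hne)).div_const 2
    refine h2.congr_deriv ?_
    simp only [Pi.pow_apply]
    field_simp
    ring
  have hcont : ContinuousOn (fun x => EO * (H x / (1 + z x))) (Set.uIcc lam lamO) := by
    rw [huIcc]
    exact (continuousOn_const.mul (hH.div (continuousOn_const.add hzc)
      (fun x hx => (hzpos x hx).ne')))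
  have hint := intervalIntegral.integral_eq_sub_of_hasDerivAt key
    (hcont.intervalIntegrable)
  rw [intervalIntegral.integral_const_mul] at hint
  rw [hint, hzO]
  ring
end

section
/- Let λ ≤ λ_O be reals and E_O > 0. Let z, 𝕳, 𝕼 : ℝ → ℝ with z and 𝕳 differentiable on [λ, λ_O], 𝕼𝕳² continuous on [λ, λ_O], satisfying z' = −E_O(1+z)²𝕳, z(λ_O) = 0, 1+z > 0 on [λ, λ_O], and 𝕳' = −E_O(1+z)𝕳²(1+𝕼). Then 𝕳(λ)/(1+z(λ)) − 𝕳(λ_O) = E_O ∫_λ^{λ_O} 𝕳(λ')² 𝕼(λ') dλ' (the integral identity used in the proof of Theorem 1 of the paper). -/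
open intervalIntegral

/-- The integral identity used in the proof of Theorem 1 of the paper:
`𝕳(λ)/(1+z(λ)) − 𝕳(λ_O) = E_O ∫_λ^{λ_O} 𝕳² 𝕼 dλ'`, which follows from the
redshift evolution equation and the definition of the effective deceleration
parameter `𝕼` via `𝕳' = −E_O(1+z)𝕳²(1+𝕼)`. -/
theorem effective_hubble_integral_identity
    (lam lamO : ℝ) (hle : lam ≤ lamO)
    (EO : ℝ) (hEO : 0 < EO)
    (z H Q : ℝ → ℝ)
    (hz : ∀ lam' ∈ Set.Icc lam lamO,
      HasDerivAt z (-EO * (1 + z lam') ^ 2 * H lam') lam')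
    (hH : ∀ lam' ∈ Set.Icc lam lamO,
      HasDerivAt H (-EO * (1 + z lam') * (H lam') ^ 2 * (1 + Q lam')) lam')
    (hQH : ContinuousOn (fun lam' => Q lam' * (H lam') ^ 2) (Set.Icc lam lamO))
    (hzO : z lamO = 0)
    (hzpos : ∀ lam' ∈ Set.Icc lam lamO, 0 < 1 + z lam') :
    H lam / (1 + z lam) - H lamO
      = EO * ∫ lam' in lam..lamO, (H lam') ^ 2 * Q lam' := by
  have huIcc : Set.uIcc lam lamO = Set.Icc lam lamO := Set.uIcc_of_le hle
  have hderiv : ∀ x ∈ Set.uIcc lam lamO,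
      HasDerivAt (fun t => H t / (1 + z t)) (-EO * (H x) ^ 2 * Q x) x := by
    intro x hx
    rw [huIcc] at hx
    have hne : (1 + z x) ≠ 0 := ne_of_gt (hzpos x hx)
    have h1 : HasDerivAt (fun t => 1 + z t) (-EO * (1 + z x) ^ 2 * H x) x :=
      (hz x hx).const_add 1
    have := (hH x hx).div h1 hne
    refine this.congr_deriv ?_
    rw [div_eq_iff (pow_ne_zero 2 hne)]
    ring
  have hint : IntervalIntegrable (fun x => -EO * (H x) ^ 2 * Q x)
      MeasureTheory.volume lam lamO := by
    apply ContinuousOn.intervalIntegrable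
    rw [huIcc]
    have : ContinuousOn (fun x => (-EO) • (Q x * (H x) ^ 2)) (Set.Icc lam lamO) :=
      hQH.const_smul (-EO)
    refine this.congr fun x hx => ?_
    simp [smul_eq_mul]; ring
  have key := intervalIntegral.integral_eq_sub_of_hasDerivAt hderiv hint
  have hI : (∫ x in lam..lamO, -EO * (H x) ^ 2 * Q x)
      = -EO * ∫ x in lam..lamO, (H x) ^ 2 * Q x := by
    rw [← intervalIntegral.integral_const_mul]
    congr 1; ext x; ring
  rw [hI, hzO] at key
  simp at key
  linarith
end

section
/- Let λ ≤ λ_O be reals and E_O > 0. Let z, 𝕳, 𝕼 : ℝ → ℝ with z and 𝕳 differentiable on [λ, λ_O], 𝕼𝕳² continuous on [λ, λ_O], satisfying z' = −E_O(1+z)²𝕳, z(λ_O) = 0, 1+z > 0 on [λ, λ_O], and 𝕳' = −E_O(1+z)𝕳²(1+𝕼). Set 𝕳_O = 𝕳(λ_O). Then the exact distance–redshift relation holds: (1/2)·(1 − (1+z(λ))^{−2}) = 𝕳_O E_O (λ_O − λ) + E_O² ∫_λ^{λ_O} ∫_{λ'}^{λ_O} 𝕼(λ'')𝕳(λ'')²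 dλ'' dλ' (eq. (14) of the paper). -/
open intervalIntegral

/-- Eq. (14) of the paper: the exact distance–redshift relation
`(1 − (1+z(λ))⁻²)/2 = 𝕳_O E_O (λ_O − λ) + E_O² ∫_λ^{λ_O}∫_{λ'}^{λ_O} 𝕼𝕳² dλ'' dλ'`. -/
theorem exact_distance_redshift_relation
    (lam lamO : ℝ) (hle : lam ≤ lamO)
    (EO : ℝ) (hEO : 0 < EO)
    (z H Q : ℝ → ℝ)
    (hz : ∀ lam' ∈ Set.Icc lam lamO,
      HasDerivAt z (-EO * (1 + z lam') ^ 2 * H lam') lam')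
    (hH : ∀ lam' ∈ Set.Icc lam lamO,
      HasDerivAt H (-EO * (1 + z lam') * (H lam') ^ 2 * (1 + Q lam')) lam')
    (hQH : ContinuousOn (fun lam' => Q lam' * (H lam') ^ 2) (Set.Icc lam lamO))
    (hzO : z lamO = 0)
    (hzpos : ∀ lam' ∈ Set.Icc lam lamO, 0 < 1 + z lam') :
    (1 - ((1 + z lam) ^ 2)⁻¹) / 2
      = H lamO * EO * (lamO - lam)
        + EO ^ 2 * ∫ lam' in lam..lamO, ∫ lam'' in lam'..lamO,
            Q lam'' * (H lam'') ^ 2 := by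
  have hzne : ∀ t ∈ Set.Icc lam lamO, (1 + z t) ≠ 0 := fun t ht => (hzpos t ht).ne'
  set g : ℝ → ℝ := fun t => EO * H t / (1 + z t) with hg
  have hmemO : lamO ∈ Set.Icc lam lamO := Set.right_mem_Icc.mpr hle
  have hgO : g lamO = EO * H lamO := by simp [hg, hzO]
  -- derivative of g
  have hg' : ∀ t ∈ Set.Icc lam lamO,
      HasDerivAt g (-(EO ^ 2 * (Q t * H t ^ 2))) t := by
    intro t ht
    have hz0 : (1 + z t) ≠ 0 := hzne t ht
    have h1 := (hH t ht).const_mul EO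
    have h2 := (hasDerivAt_const t (1 : ℝ)).add (hz t ht)
    have := h1.div h2 hz0
    refine this.congr_deriv ?_
    simp only [Pi.add_apply]
    field_simp
    ring
  -- derivative of F
  have hF' : ∀ t ∈ Set.Icc lam lamO,
      HasDerivAt (fun s => (1 - ((1 + z s) ^ 2)⁻¹) / 2) (-(g t)) t := by
    intro t ht
    have hz0 : (1 + z t) ≠ 0 := hzne t ht
    have hd : HasDerivAt (fun s => (1 + z s) ^ 2)
        (2 * (1 + z t) * (-EO * (1 + z t) ^ 2 * H t)) t := by
      have := ((hasDerivAt_const t (1 : ℝ)).add (hz t ht)).pow 2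
      refine this.congr_deriv ?_
      simp only [Pi.add_apply]
      ring
    have hd2 := hd.inv (pow_ne_zero 2 hz0)
    have h3 := ((hasDerivAt_const t (1 : ℝ)).sub hd2).div_const 2
    refine h3.congr_deriv ?_
    simp only [hg]
    field_simp
    ring
  -- continuity
  have hzc : ContinuousOn z (Set.Icc lam lamO) :=
    fun t ht => (hz t ht).continuousAt.continuousWithinAt
  have hHc : ContinuousOn H (Set.Icc lam lamO) :=
    fun t ht => (hH t ht).continuousAt.continuousWithinAt
  have hgc : ContinuousOn g (Set.Icc lam lamO) :=
    (continuousOn_const.mul hHc).div (continuousOn_const.add hzc) hzne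
  have huIcc : Set.uIcc lam lamO = Set.Icc lam lamO := Set.uIcc_of_le hle
  have hgInt : IntervalIntegrable g MeasureTheory.volume lam lamO :=
    (hgc.mono huIcc.subset).intervalIntegrable
  -- FTC for F
  have hFTC1 : (∫ t in lam..lamO, -(g t))
      = (1 - ((1 + z lamO) ^ 2)⁻¹) / 2 - (1 - ((1 + z lam) ^ 2)⁻¹) / 2 := by
    apply intervalIntegral.integral_eq_sub_of_hasDerivAt
    · intro t ht; exact hF' t (huIcc ▸ ht)
    · exact hgInt.neg
  have hFlam : (1 - ((1 + z lam) ^ 2)⁻¹) / 2 = ∫ t in lam..lamO, g t := by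
    rw [intervalIntegral.integral_neg] at hFTC1
    simp [hzO] at hFTC1
    linarith
  -- FTC for g on subintervals
  have hsub : ∀ s ∈ Set.Icc lam lamO, Set.Icc s lamO ⊆ Set.Icc lam lamO :=
    fun s hs => Set.Icc_subset_Icc hs.1 le_rfl
  have hinner : ∀ s ∈ Set.Icc lam lamO,
      (∫ t in s..lamO, Q t * H t ^ 2) = (g s - EO * H lamO) / EO ^ 2 := by
    intro s hs
    have huIcc2 : Set.uIcc s lamO = Set.Icc s lamO := Set.uIcc_of_le hs.2
    have hqint : IntervalIntegrable (fun t => -(EO ^ 2 * (Q t * H t ^ 2)))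
        MeasureTheory.volume s lamO := by
      apply ContinuousOn.intervalIntegrable
      rw [huIcc2]
      exact (continuousOn_const.mul (hQH.mono (hsub s hs))).neg
    have hFTC2 : (∫ t in s..lamO, -(EO ^ 2 * (Q t * H t ^ 2))) = g lamO - g s := by
      apply intervalIntegral.integral_eq_sub_of_hasDerivAt
      · intro t ht; exact hg' t (hsub s hs (huIcc2 ▸ ht))
      · exact hqint
    have hEO2 : (EO : ℝ) ^ 2 ≠ 0 := pow_ne_zero 2 hEO.ne'
    rw [intervalIntegral.integral_neg, intervalIntegral.integral_const_mul] at hFTC2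
    rw [hgO] at hFTC2
    field_simp
    linarith
  -- rewrite outer integral
  have houter : (∫ s in lam..lamO, ∫ t in s..lamO, Q t * H t ^ 2)
      = (∫ s in lam..lamO, (g s - EO * H lamO) / EO ^ 2) := by
    apply intervalIntegral.integral_congr
    intro s hs
    exact hinner s (huIcc ▸ hs)
  have hconstInt : IntervalIntegrable (fun _ : ℝ => EO * H lamO)
      MeasureTheory.volume lam lamO := intervalIntegrable_const
  have hsplit : (∫ s in lam..lamO, (g s - EO * H lamO) / EO ^ 2)
      = ((∫ s in lam..lamO, g s) - EO * H lamO * (lamO - lam)) / EO ^ 2 := by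
    rw [intervalIntegral.integral_div, intervalIntegral.integral_sub hgInt hconstInt]
    simp
    ring
  rw [houter, hsplit, hFlam]
  have hEO2 : (EO : ℝ) ^ 2 ≠ 0 := pow_ne_zero 2 hEO.ne'
  field_simp
  ring
end

section
/- (Theorem 1, sub-Milne dimming.) Let λ_e ≤ λ_O be reals and E_O > 0. Let z, 𝕳, 𝕼, d_A, F : ℝ → ℝ satisfy on [λ_e, λ_O]: z differentiable with z' = −E_O(1+z)²𝕳, z(λ_O) = 0, 1+z > 0; 𝕳 differentiable with 𝕳' = −E_O(1+z)𝕳²(1+𝕼) and 𝕳_O := 𝕳(λ_O) > 0; 𝕼𝕳² continuous; d_A twice differentiable with d_A'' = −F·d_A, F ≥ 0, d_A ≥ 0, d_A(λ_O) = 0, d_A'(λ_O) = −E_O. If λ ∈ [λ_e, λ_O] is such that ∫_λ^{λ_O} ∫_{λ'}^{λ_O} 𝕼(λ'')𝕳(λ'')² dλ'' dλ' ≥ 0, then 𝕳_O · d_A(λ) ≤ (1/2)·(1 − (1+z(λ))^{−2}); that is, the angular diameter distance at redshift z(λ) is bounded above by that of the Milne universe model. -/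
open intervalIntegral

/-- Theorem 1 of the paper (sub-Milne dimming): in a general-relativistic
spacetime obeying the null energy condition, with `𝕳_O > 0`, if the double
integral of `𝕼𝕳²` is nonnegative at `λ`, then the angular diameter distance
at redshift `z(λ)` is bounded above by that of the Milne universe model:
`𝕳_O d_A ≤ (1 − (1+z)⁻²)/2`. -/
theorem sub_Milne_dimming
    (lamE lamO : ℝ) (hle : lamE ≤ lamO)
    (EO : ℝ) (hEO : 0 < EO)
    (z H Q dA dA' F : ℝ → ℝ)
    (hz : ∀ lam ∈ Set.Icc lamE lamO,
      HasDerivAt z (-EO * (1 + z lam) ^ 2 * H lam) lam)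
    (hzO : z lamO = 0)
    (hzpos : ∀ lam ∈ Set.Icc lamE lamO, 0 < 1 + z lam)
    (hH : ∀ lam ∈ Set.Icc lamE lamO,
      HasDerivAt H (-EO * (1 + z lam) * (H lam) ^ 2 * (1 + Q lam)) lam)
    (hHO : 0 < H lamO)
    (hQH : ContinuousOn (fun lam => Q lam * (H lam) ^ 2) (Set.Icc lamE lamO))
    (hdA : ∀ lam ∈ Set.Icc lamE lamO, HasDerivAt dA (dA' lam) lam)
    (hfocus : ∀ lam ∈ Set.Icc lamE lamO, HasDerivAt dA' (-(F lam) * dA lam) lam)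
    (hF : ∀ lam ∈ Set.Icc lamE lamO, 0 ≤ F lam)
    (hdApos : ∀ lam ∈ Set.Icc lamE lamO, 0 ≤ dA lam)
    (hvertex : dA lamO = 0)
    (hslope : dA' lamO = -EO)
    (lam : ℝ) (hlam : lam ∈ Set.Icc lamE lamO)
    (hQQ : 0 ≤ ∫ lam' in lam..lamO, ∫ lam'' in lam'..lamO,
      Q lam'' * (H lam'') ^ 2) :
    H lamO * dA lam ≤ (1 - ((1 + z lam) ^ 2)⁻¹) / 2 := by
  obtain ⟨hlam1, hlam2⟩ := hlam
  have hlamI : lam ∈ Set.Icc lamE lamO := ⟨hlam1, hlam2⟩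
  have hOI : lamO ∈ Set.Icc lamE lamO := ⟨hle, le_rfl⟩
  have hsub : Set.Icc lam lamO ⊆ Set.Icc lamE lamO := Set.Icc_subset_Icc hlam1 le_rfl
  have huIcc : Set.uIcc lam lamO = Set.Icc lam lamO := Set.uIcc_of_le hlam2
  have hsubu : Set.uIcc lam lamO ⊆ Set.Icc lamE lamO := by rw [huIcc]; exact hsub
  -- Part A: dA lam ≤ EO * (lamO - lam)
  have hdA'cont : ContinuousOn dA' (Set.Icc lamE lamO) := fun t ht =>
    ((hfocus t ht).continuousAt).continuousWithinAt
  have hanti : AntitoneOn dA' (Set.Icc lamE lamO) := by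
    apply antitoneOn_of_deriv_nonpos (convex_Icc _ _) hdA'cont
    · intro x hx
      rw [interior_Icc] at hx
      exact (hfocus x (Set.Ioo_subset_Icc_self hx)).differentiableAt.differentiableWithinAt
    · intro x hx
      rw [interior_Icc] at hx
      rw [(hfocus x (Set.Ioo_subset_Icc_self hx)).deriv]
      have := mul_nonneg (hF x (Set.Ioo_subset_Icc_self hx))
        (hdApos x (Set.Ioo_subset_Icc_self hx))
      nlinarith
  have hdA'ge : ∀ t ∈ Set.Icc lamE lamO, -EO ≤ dA' t := by
    intro t ht
    have := hanti ht hOI ht.2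
    rwa [hslope] at this
  have hdAcont : ContinuousOn dA (Set.Icc lamE lamO) := fun t ht =>
    ((hdA t ht).continuousAt).continuousWithinAt
  have hphi : MonotoneOn (fun t => dA t + EO * t) (Set.Icc lamE lamO) := by
    apply monotoneOn_of_deriv_nonneg (convex_Icc _ _)
      (hdAcont.add (continuousOn_const.mul continuousOn_id))
    · intro x hx
      rw [interior_Icc] at hx
      exact (((hdA x (Set.Ioo_subset_Icc_self hx)).add
        ((hasDerivAt_id x).const_mul EO)).differentiableAt).differentiableWithinAt
    · intro x hx
      rw [interior_Icc] at hx
      have hd : HasDerivAt (fun t => dA t + EO * t) (dA' x + EO * 1) x :=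
        (hdA x (Set.Ioo_subset_Icc_self hx)).add ((hasDerivAt_id x).const_mul EO)
      change 0 ≤ deriv (fun t => dA t + EO * t) x
      rw [hd.deriv]
      have := hdA'ge x (Set.Ioo_subset_Icc_self hx)
      linarith
  have partA : dA lam ≤ EO * (lamO - lam) := by
    have := hphi hlamI hOI hlam2
    simp only [hvertex] at this
    linarith
  -- derivative of h := H/(1+z)
  have hne : ∀ t ∈ Set.Icc lamE lamO, (1 + z t) ≠ 0 := fun t ht => (hzpos t ht).ne'
  have hderiv_h : ∀ t ∈ Set.Icc lamE lamO,
      HasDerivAt (fun s => H s / (1 + z s)) (-(EO * (Q t * (H t) ^ 2))) t := by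
    intro t ht
    have h1 : HasDerivAt (fun s => 1 + z s) (-EO * (1 + z t) ^ 2 * H t) t :=
      (hz t ht).const_add 1
    have h2 : HasDerivAt (fun s => H s / (1 + z s)) _ t := (hH t ht).div h1 (hne t ht)
    convert h2 using 1
    have hu := hne t ht
    field_simp
    ring
  -- value of h via FTC
  have hQHint : ∀ t ∈ Set.Icc lam lamO,
      IntervalIntegrable (fun s => Q s * (H s) ^ 2) MeasureTheory.volume t lamO := by
    intro t ht
    apply ContinuousOn.intervalIntegrable
    apply hQH.mono
    rw [Set.uIcc_of_le ht.2]
    exact Set.Icc_subset_Icc (le_trans hlam1 ht.1) le_rfl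
  have hK : ∀ t ∈ Set.Icc lam lamO,
      H t / (1 + z t) = H lamO + EO * ∫ s in t..lamO, Q s * (H s) ^ 2 := by
    intro t ht
    have hsub2 : Set.uIcc t lamO ⊆ Set.Icc lamE lamO := by
      rw [Set.uIcc_of_le ht.2]
      exact Set.Icc_subset_Icc (le_trans hlam1 ht.1) le_rfl
    have hint : IntervalIntegrable (fun s => -(EO * (Q s * (H s) ^ 2)))
        MeasureTheory.volume t lamO := ((hQHint t ht).const_mul EO).neg
    have hftc := intervalIntegral.integral_eq_sub_of_hasDerivAt
      (f := fun s => H s / (1 + z s)) (f' := fun s => -(EO * (Q s * (H s) ^ 2)))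
      (fun x hx => hderiv_h x (hsub2 hx)) hint
    rw [intervalIntegral.integral_neg, intervalIntegral.integral_const_mul] at hftc
    simp only [hzO, add_zero, div_one] at hftc
    linarith [hftc]
  -- derivative of psi
  have hpsi : ∀ t ∈ Set.Icc lamE lamO,
      HasDerivAt (fun s => (1 - ((1 + z s) ^ 2)⁻¹) / 2) (-(EO * (H t / (1 + z t)))) t := by
    intro t ht
    have h1 : HasDerivAt (fun s => 1 + z s) (-EO * (1 + z t) ^ 2 * H t) t :=
      (hz t ht).const_add 1
    have h2 : HasDerivAt (fun s => ((1 + z s) ^ 2)⁻¹)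
        (-((2 : ℕ) * (1 + z t) ^ (2 - 1) * (-EO * (1 + z t) ^ 2 * H t)) / ((1 + z t) ^ 2) ^ 2) t :=
      (h1.pow 2).inv (pow_ne_zero 2 (hne t ht))
    have h3 : HasDerivAt (fun s => (1 - ((1 + z s) ^ 2)⁻¹) / 2) _ t := (h2.const_sub 1).div_const 2
    convert h3 using 1
    have hu := hne t ht
    field_simp
    ring
  -- h continuous
  have hzc : ContinuousOn (fun s => 1 + z s) (Set.Icc lamE lamO) :=
    continuousOn_const.add (fun t ht => ((hz t ht).continuousAt).continuousWithinAt)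
  have hhcont : ContinuousOn (fun s => H s / (1 + z s)) (Set.Icc lamE lamO) :=
    ContinuousOn.div (fun t ht => ((hH t ht).continuousAt).continuousWithinAt) hzc hne
  -- K continuous
  have hKcont : ContinuousOn (fun t => ∫ s in t..lamO, Q s * (H s) ^ 2)
      (Set.uIcc lam lamO) := by
    apply intervalIntegral.continuousOn_primitive_interval_left
    have h1 : MeasureTheory.IntegrableOn (fun s => Q s * (H s) ^ 2) (Set.Icc lam lamO)
        MeasureTheory.volume := (hQH.mono hsub).integrableOn_Icc
    rwa [huIcc]
  -- FTC for psi
  have hpsiint : IntervalIntegrable (fun s => -(EO * (H s / (1 + z s))))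
      MeasureTheory.volume lam lamO :=
    ((continuousOn_const.mul (hhcont.mono hsubu)).neg).intervalIntegrable
  have hftc2 := intervalIntegral.integral_eq_sub_of_hasDerivAt
    (f := fun s => (1 - ((1 + z s) ^ 2)⁻¹) / 2)
    (f' := fun s => -(EO * (H s / (1 + z s))))
    (fun x hx => hpsi x (hsubu hx)) hpsiint
  rw [intervalIntegral.integral_neg, intervalIntegral.integral_const_mul] at hftc2
  simp only [hzO] at hftc2
  norm_num at hftc2
  -- hftc2 : -(EO * ∫ h) = 0 - psi lam
  -- split the integral of h
  have hcongr : (∫ s in lam..lamO, H s / (1 + z s)) =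
      ∫ s in lam..lamO, (H lamO + EO * ∫ u in s..lamO, Q u * (H u) ^ 2) := by
    apply intervalIntegral.integral_congr
    intro s hs
    exact hK s (huIcc ▸ hs)
  have hKint : IntervalIntegrable (fun s => EO * ∫ u in s..lamO, Q u * (H u) ^ 2)
      MeasureTheory.volume lam lamO :=
    (continuousOn_const.mul hKcont).intervalIntegrable
  have hsplit : (∫ s in lam..lamO, (H lamO + EO * ∫ u in s..lamO, Q u * (H u) ^ 2)) =
      (lamO - lam) * H lamO +
        EO * ∫ s in lam..lamO, ∫ u in s..lamO, Q u * (H u) ^ 2 := by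
    rw [intervalIntegral.integral_add intervalIntegrable_const hKint,
      intervalIntegral.integral_const, intervalIntegral.integral_const_mul]
    simp [smul_eq_mul]
  have hfin : (1 - ((1 + z lam) ^ 2)⁻¹) / 2 =
      EO * ((lamO - lam) * H lamO +
        EO * ∫ s in lam..lamO, ∫ u in s..lamO, Q u * (H u) ^ 2) := by
    rw [← hsplit, ← hcongr]
    linarith [hftc2]
  rw [hfin]
  have hA : H lamO * dA lam ≤ H lamO * (EO * (lamO - lam)) :=
    mul_le_mul_of_nonneg_left partA hHO.le
  nlinarith [hQQ, sq_nonneg EO]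
end

section
/- Let λ ≤ λ_O be reals and E_O > 0. Let d_A, F : ℝ → ℝ with d_A twice continuously differentiable on [λ, λ_O], F continuous and F ≥ 0 on [λ, λ_O], satisfying d_A'' = −F·d_A on [λ, λ_O], d_A(λ_O) = 0, d_A'(λ_O) = −E_O, and suppose d_A(λ') ≤ d_A(λ) for all λ' ∈ [λ, λ_O]. Then d_A(λ) ≥ E_O(λ_O − λ) − d_A(λ)·(λ_O − λ)·∫_λ^{λ_O} F(λ') dλ' (eqs. (19)–(21) of the paper: lower bound on the angular diameter distance in terms of the accumulated focusing). -/
open intervalIntegral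

/-- Eqs. (19)–(21) of the paper: lower bound on the angular diameter distance
in terms of the accumulated focusing,
`d_A(λ) ≥ E_O(λ_O − λ) − d_A(λ)(λ_O − λ)∫_λ^{λ_O} F dλ'`
(in the paper's notation, `d_A ≥ E_O(λ_O−λ)(1 − E_O(λ_O−λ)𝓛⁻¹)`). -/
theorem dA_lower_bound_focusing
    (lam lamO : ℝ) (hle : lam ≤ lamO)
    (EO : ℝ) (hEO : 0 < EO)
    (dA dA' F : ℝ → ℝ)
    (hdA : ∀ lam' ∈ Set.Icc lam lamO, HasDerivAt dA (dA' lam') lam')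
    (hfocus : ∀ lam' ∈ Set.Icc lam lamO,
      HasDerivAt dA' (-(F lam') * dA lam') lam')
    (hF : ContinuousOn F (Set.Icc lam lamO))
    (hFpos : ∀ lam' ∈ Set.Icc lam lamO, 0 ≤ F lam')
    (hdAc : ContinuousOn dA (Set.Icc lam lamO))
    (hvertex : dA lamO = 0)
    (hslope : dA' lamO = -EO)
    (hmono : ∀ lam' ∈ Set.Icc lam lamO, dA lam' ≤ dA lam) :
    dA lam ≥ EO * (lamO - lam)
      - dA lam * (lamO - lam) * ∫ lam' in lam..lamO, F lam' := by
  have hlamO : lamO ∈ Set.Icc lam lamO := ⟨hle, le_refl _⟩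
  have hdAlam : 0 ≤ dA lam := by
    have := hmono lamO hlamO; rw [hvertex] at this; linarith
  -- continuity of dA'
  have hdA'c : ContinuousOn dA' (Set.Icc lam lamO) := fun x hx =>
    (hfocus x hx).continuousAt.continuousWithinAt
  -- continuity of F * dA
  have hFdAc : ContinuousOn (fun t => F t * dA t) (Set.Icc lam lamO) := hF.mul hdAc
  set C : ℝ := dA lam * ∫ t in lam..lamO, F t with hC
  -- key : dA' x = -EO + ∫ x..lamO F·dA
  have key : ∀ x ∈ Set.Icc lam lamO,
      dA' x = -EO + ∫ t in x..lamO, F t * dA t := by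
    intro x hx
    have hsub : Set.uIcc x lamO ⊆ Set.Icc lam lamO := by
      rw [Set.uIcc_of_le hx.2]
      exact Set.Icc_subset_Icc hx.1 le_rfl
    have hint : IntervalIntegrable (fun t => -(F t) * dA t) MeasureTheory.volume x lamO := by
      apply ContinuousOn.intervalIntegrable_of_Icc hx.2
      exact (((hF.mul hdAc).mono (by rw [Set.uIcc_of_le hx.2] at hsub; exact hsub)).neg.congr
        (by intro t ht; simp))
    have heq := intervalIntegral.integral_eq_sub_of_hasDerivAt
      (f := dA') (f' := fun t => -(F t) * dA t)
      (fun t ht => hfocus t (hsub ht)) hint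
    have hneg : (∫ t in x..lamO, -(F t) * dA t) = -∫ t in x..lamO, F t * dA t := by
      rw [← intervalIntegral.integral_neg]
      congr 1; ext t; ring
    rw [hneg, hslope] at heq
    linarith
  -- bound : ∫ x..lamO F·dA ≤ C for x ∈ [lam, lamO]
  have bound : ∀ x ∈ Set.Icc lam lamO, (∫ t in x..lamO, F t * dA t) ≤ C := by
    intro x hx
    have hsub : Set.Icc x lamO ⊆ Set.Icc lam lamO := Set.Icc_subset_Icc hx.1 le_rfl
    have h1 : (∫ t in x..lamO, F t * dA t) ≤ ∫ t in x..lamO, F t * dA lam := by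
      apply intervalIntegral.integral_mono_on hx.2
      · exact (hFdAc.mono hsub).intervalIntegrable_of_Icc hx.2
      · exact (((hF.mono hsub).mul continuousOn_const)).intervalIntegrable_of_Icc hx.2
      · intro t ht
        exact mul_le_mul_of_nonneg_left (hmono t (hsub ht)) (hFpos t (hsub ht))
    have h2 : (∫ t in x..lamO, F t * dA lam) = dA lam * ∫ t in x..lamO, F t := by
      rw [← intervalIntegral.integral_const_mul]
      congr 1; ext t; ring
    have h3 : (∫ t in x..lamO, F t) ≤ ∫ t in lam..lamO, F t := by
      have hsplit : (∫ t in lam..lamO, F t)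
          = (∫ t in lam..x, F t) + ∫ t in x..lamO, F t := by
        rw [intervalIntegral.integral_add_adjacent_intervals]
        · exact (hF.mono (Set.Icc_subset_Icc le_rfl hx.2)).intervalIntegrable_of_Icc hx.1
        · exact (hF.mono hsub).intervalIntegrable_of_Icc hx.2
      have hnn : 0 ≤ ∫ t in lam..x, F t := by
        apply intervalIntegral.integral_nonneg hx.1
        intro t ht
        exact hFpos t ⟨ht.1, ht.2.trans hx.2⟩
      linarith
    calc (∫ t in x..lamO, F t * dA t) ≤ ∫ t in x..lamO, F t * dA lam := h1
      _ = dA lam * ∫ t in x..lamO, F t := h2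
      _ ≤ dA lam * ∫ t in lam..lamO, F t := mul_le_mul_of_nonneg_left h3 hdAlam
      _ = C := rfl
  -- ∫ lam..lamO dA' = dA lamO - dA lam = - dA lam
  have hfund : (∫ x in lam..lamO, dA' x) = - dA lam := by
    have heq := intervalIntegral.integral_eq_sub_of_hasDerivAt
      (f := dA) (f' := dA')
      (fun t ht => hdA t (by rwa [Set.uIcc_of_le hle] at ht))
      (hdA'c.intervalIntegrable_of_Icc hle)
    rw [heq, hvertex]; ring
  -- dA' x ≤ -EO + C, integrate
  have hmain : (∫ x in lam..lamO, dA' x) ≤ (lamO - lam) * (-EO + C) := by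
    have : (∫ x in lam..lamO, dA' x) ≤ ∫ _x in lam..lamO, (-EO + C) := by
      apply intervalIntegral.integral_mono_on hle
      · exact hdA'c.intervalIntegrable_of_Icc hle
      · exact intervalIntegrable_const
      · intro x hx
        rw [key x hx]
        linarith [bound x hx]
    rwa [intervalIntegral.integral_const, smul_eq_mul] at this
  rw [hfund] at hmain
  have : EO * (lamO - lam) - C * (lamO - lam) ≤ dA lam := by linarith
  have hCexp : C * (lamO - lam)
      = dA lam * (lamO - lam) * ∫ t in lam..lamO, F t := by ring
  linarith [hCexp ▸ this]
end

section
/- (Eq. (22) of the paper.) Let λ < λ_O be reals and E_O > 0. Let z, 𝕳, 𝕼, d_A, F : ℝ → ℝ satisfy on [λ, λ_O]: z differentiable with z' = −E_O(1+z)²𝕳, z(λ_O)=0, 1+z > 0; 𝕳 differentiable with 𝕳' = −E_O(1+z)𝕳²(1+𝕼) and 𝕳_O := 𝕳(λ_O) > 0; 𝕼𝕳² continuous; d_A twice continuously differentiable with d_A'' = −F·d_A, F continuous, F ≥ 0, d_A(λ_O)=0, d_A'(λ_O)=−E_O, and d_A(λ') ≤ d_A(λ) for all λ' ∈ [λ,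 λ_O]. Suppose moreover D := 1 − d_A(λ)·(∫_λ^{λ_O}F dλ')/E_O > 0 and X := (E_O/((λ_O−λ)𝕳_O))·∫_λ^{λ_O}∫_{λ'}^{λ_O}𝕼𝕳² dλ''dλ' ≥ −1. Then (1/2)·(1 − (1+z(λ))^{−2}) ≤ 𝕳_O · d_A(λ) · (1 + X)/D. -/
open intervalIntegral

/-- Eq. (22) of the paper: the bound
`(1 − (1+z)⁻²)/2 ≤ 𝕳_O d_A (1 + X)/D` with
`X = (E_O/((λ_O−λ)𝕳_O)) ∫∫ 𝕼𝕳²` and `D = 1 − d_A (∫F)/E_O`. -/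
theorem distance_redshift_upper_bound
    (lam lamO : ℝ) (hlt : lam < lamO)
    (EO : ℝ) (hEO : 0 < EO)
    (z H Q dA dA' F : ℝ → ℝ)
    (hz : ∀ lam' ∈ Set.Icc lam lamO,
      HasDerivAt z (-EO * (1 + z lam') ^ 2 * H lam') lam')
    (hzO : z lamO = 0)
    (hzpos : ∀ lam' ∈ Set.Icc lam lamO, 0 < 1 + z lam')
    (hH : ∀ lam' ∈ Set.Icc lam lamO,
      HasDerivAt H (-EO * (1 + z lam') * (H lam') ^ 2 * (1 + Q lam')) lam')
    (hHO : 0 < H lamO)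
    (hQH : ContinuousOn (fun lam' => Q lam' * (H lam') ^ 2) (Set.Icc lam lamO))
    (hdA : ∀ lam' ∈ Set.Icc lam lamO, HasDerivAt dA (dA' lam') lam')
    (hfocus : ∀ lam' ∈ Set.Icc lam lamO,
      HasDerivAt dA' (-(F lam') * dA lam') lam')
    (hF : ContinuousOn F (Set.Icc lam lamO))
    (hFpos : ∀ lam' ∈ Set.Icc lam lamO, 0 ≤ F lam')
    (hvertex : dA lamO = 0)
    (hslope : dA' lamO = -EO)
    (hmono : ∀ lam' ∈ Set.Icc lam lamO, dA lam' ≤ dA lam)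
    (hD : 0 < 1 - dA lam * (∫ lam' in lam..lamO, F lam') / EO)
    (hX : -1 ≤ (EO / ((lamO - lam) * H lamO))
      * ∫ lam' in lam..lamO, ∫ lam'' in lam'..lamO, Q lam'' * (H lam'') ^ 2) :
    (1 - ((1 + z lam) ^ 2)⁻¹) / 2
      ≤ H lamO * dA lam
          * (1 + (EO / ((lamO - lam) * H lamO))
              * ∫ lam' in lam..lamO, ∫ lam'' in lam'..lamO,
                  Q lam'' * (H lam'') ^ 2)
          / (1 - dA lam * (∫ lam' in lam..lamO, F lam') / EO) := by
  have hle : lam ≤ lamO := hlt.le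
  have hLpos : (0:ℝ) < lamO - lam := sub_pos.mpr hlt
  have hmemO : lamO ∈ Set.Icc lam lamO := ⟨hle, le_rfl⟩
  have hmemL : lam ∈ Set.Icc lam lamO := ⟨le_rfl, hle⟩
  have hsub : ∀ x ∈ Set.Icc lam lamO, Set.uIcc x lamO ⊆ Set.Icc lam lamO := by
    intro x hx
    rw [Set.uIcc_of_le hx.2]
    exact Set.Icc_subset_Icc hx.1 le_rfl
  have huIcc : Set.uIcc lam lamO = Set.Icc lam lamO := Set.uIcc_of_le hle
  -- continuity facts
  have hzc : ContinuousOn z (Set.Icc lam lamO) :=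
    fun x hx => (hz x hx).continuousAt.continuousWithinAt
  have hHc : ContinuousOn H (Set.Icc lam lamO) :=
    fun x hx => (hH x hx).continuousAt.continuousWithinAt
  have hdAc : ContinuousOn dA (Set.Icc lam lamO) :=
    fun x hx => (hdA x hx).continuousAt.continuousWithinAt
  have hdA'c : ContinuousOn dA' (Set.Icc lam lamO) :=
    fun x hx => (hfocus x hx).continuousAt.continuousWithinAt
  -- the function P = H/(1+z)
  set P : ℝ → ℝ := fun x => H x / (1 + z x) with hPdef
  have hPc : ContinuousOn P (Set.Icc lam lamO) :=
    hHc.div (continuousOn_const.add hzc) (fun x hx => (hzpos x hx).ne')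
  have hPderiv : ∀ x ∈ Set.Icc lam lamO, HasDerivAt P (-EO * (Q x * (H x) ^ 2)) x := by
    intro x hx
    have hne : (1 + z x) ≠ 0 := (hzpos x hx).ne'
    have h1 : HasDerivAt (fun y => 1 + z y) (-EO * (1 + z x) ^ 2 * H x) x :=
      (hz x hx).const_add 1
    have h2 := (hH x hx).div h1 hne
    refine h2.congr_deriv ?_
    field_simp
    ring
  -- identity : P x = H lamO + EO * ∫ Q H²
  have hPid : ∀ x ∈ Set.Icc lam lamO,
      P x = H lamO + EO * ∫ t in x..lamO, Q t * (H t) ^ 2 := by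
    intro x hx
    have hint : IntervalIntegrable (fun t => -EO * (Q t * (H t) ^ 2))
        MeasureTheory.volume x lamO :=
      ((continuousOn_const.mul (hQH.mono (hsub x hx)))).intervalIntegrable
    have key := intervalIntegral.integral_eq_sub_of_hasDerivAt
      (fun t ht => hPderiv t (hsub x hx ht)) hint
    rw [intervalIntegral.integral_const_mul] at key
    have hPO : P lamO = H lamO := by simp [hPdef, hzO]
    rw [hPO] at key
    nlinarith [key]
  -- derivative of G = (1 - (1+z)⁻²)/2
  have hGderiv : ∀ x ∈ Set.Icc lam lamO,
      HasDerivAt (fun y => (1 - ((1 + z y) ^ 2)⁻¹) / 2) (-EO * P x) x := by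
    intro x hx
    have hne : (1 + z x) ≠ 0 := (hzpos x hx).ne'
    have h1 : HasDerivAt (fun y => 1 + z y) (-EO * (1 + z x) ^ 2 * H x) x :=
      (hz x hx).const_add 1
    have h2 := h1.pow 2
    have h3 := h2.inv (pow_ne_zero 2 hne)
    have h4 := (h3.const_sub 1).div_const 2
    refine h4.congr_deriv ?_
    simp only [hPdef, Pi.pow_apply]
    field_simp
    ring
  -- FTC for G
  have hGint : (∫ x in lam..lamO, -EO * P x)
      = (1 - ((1 + z lamO) ^ 2)⁻¹) / 2 - (1 - ((1 + z lam) ^ 2)⁻¹) / 2 := by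
    apply intervalIntegral.integral_eq_sub_of_hasDerivAt
    · intro t ht; exact hGderiv t (huIcc ▸ ht)
    · exact ((continuousOn_const.mul hPc).mono huIcc.subset).intervalIntegrable
  have hGO : (1 - ((1 + z lamO) ^ 2)⁻¹) / 2 = 0 := by simp [hzO]
  -- express integral of P
  have hPint : (∫ x in lam..lamO, P x)
      = H lamO * (lamO - lam)
        + EO * ∫ x in lam..lamO, ∫ t in x..lamO, Q t * (H t) ^ 2 := by
    have hIc : ContinuousOn (fun x => ∫ t in x..lamO, Q t * (H t) ^ 2)
        (Set.Icc lam lamO) := by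
      have : ∀ x ∈ Set.Icc lam lamO,
          (fun x => ∫ t in x..lamO, Q t * (H t) ^ 2) x = (P x - H lamO) / EO := by
        intro x hx
        rw [hPid x hx]; field_simp; ring
      exact ContinuousOn.congr (((hPc.sub continuousOn_const)).div_const EO) this
    have h1 : (∫ x in lam..lamO, P x)
        = ∫ x in lam..lamO, (H lamO + EO * ∫ t in x..lamO, Q t * (H t) ^ 2) := by
      apply intervalIntegral.integral_congr
      intro x hx; exact hPid x (huIcc ▸ hx)
    rw [h1, intervalIntegral.integral_add (g := fun x => EO * ∫ t in x..lamO, Q t * (H t) ^ 2) intervalIntegrable_const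
      ((continuousOn_const.mul hIc).mono huIcc.subset).intervalIntegrable,
      intervalIntegral.integral_const, intervalIntegral.integral_const_mul]
    simp [smul_eq_mul, mul_comm]
  -- key identity 1
  have key1 : (1 - ((1 + z lam) ^ 2)⁻¹) / 2
      = EO * H lamO * (lamO - lam)
        + EO ^ 2 * ∫ x in lam..lamO, ∫ t in x..lamO, Q t * (H t) ^ 2 := by
    rw [intervalIntegral.integral_const_mul, hPint] at hGint
    rw [hGO] at hGint
    nlinarith [hGint]
  -- step 2: dA' x = -EO + K x
  have hdA'id : ∀ x ∈ Set.Icc lam lamO,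
      dA' x = -EO + ∫ t in x..lamO, F t * dA t := by
    intro x hx
    have hint : IntervalIntegrable (fun t => -(F t) * dA t)
        MeasureTheory.volume x lamO :=
      (((hF.mono (hsub x hx)).neg.mul (hdAc.mono (hsub x hx)))).intervalIntegrable
    have key := intervalIntegral.integral_eq_sub_of_hasDerivAt
      (fun t ht => hfocus t (hsub x hx ht)) hint
    have : (∫ t in x..lamO, -(F t) * dA t) = -∫ t in x..lamO, F t * dA t := by
      rw [← intervalIntegral.integral_neg]; congr 1; ext t; ring
    rw [this, hslope] at key
    linarith [key]
  -- K is continuous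
  have hKc : ContinuousOn (fun x => ∫ t in x..lamO, F t * dA t) (Set.Icc lam lamO) := by
    have : ∀ x ∈ Set.Icc lam lamO,
        (fun x => ∫ t in x..lamO, F t * dA t) x = dA' x + EO := by
      intro x hx; rw [hdA'id x hx]; ring
    exact ContinuousOn.congr (hdA'c.add continuousOn_const) this
  -- FTC for dA
  have hdAint : (∫ x in lam..lamO, dA' x) = dA lamO - dA lam := by
    apply intervalIntegral.integral_eq_sub_of_hasDerivAt
    · intro t ht; exact hdA t (huIcc ▸ ht)
    · exact (hdA'c.mono huIcc.subset).intervalIntegrable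
  have key2 : dA lam = EO * (lamO - lam) - ∫ x in lam..lamO, ∫ t in x..lamO, F t * dA t := by
    have h1 : (∫ x in lam..lamO, dA' x)
        = ∫ x in lam..lamO, (-EO + ∫ t in x..lamO, F t * dA t) := by
      apply intervalIntegral.integral_congr
      intro x hx; exact hdA'id x (huIcc ▸ hx)
    rw [h1, intervalIntegral.integral_add intervalIntegrable_const
      ((hKc.mono huIcc.subset)).intervalIntegrable,
      intervalIntegral.integral_const] at hdAint
    rw [hvertex] at hdAint
    simp only [smul_eq_mul] at hdAint
    linarith [hdAint]
  -- dA lam ≥ 0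
  have hdApos : 0 ≤ dA lam := by
    have := hmono lamO hmemO; rw [hvertex] at this; linarith
  -- step 3 : bound ∫K
  set SF : ℝ := ∫ t in lam..lamO, F t with hSF
  have hKbound : ∀ x ∈ Set.Icc lam lamO,
      (∫ t in x..lamO, F t * dA t) ≤ dA lam * SF := by
    intro x hx
    have hsx := hsub x hx
    have h1 : (∫ t in x..lamO, F t * dA t) ≤ ∫ t in x..lamO, F t * dA lam := by
      apply intervalIntegral.integral_mono_on hx.2
      · exact (((hF.mono hsx).mul (hdAc.mono hsx))).intervalIntegrable
      · exact (((hF.mono hsx).mul continuousOn_const)).intervalIntegrable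
      · intro t ht
        have htmem : t ∈ Set.Icc lam lamO := ⟨le_trans hx.1 ht.1, ht.2⟩
        exact mul_le_mul_of_nonneg_left (hmono t htmem) (hFpos t htmem)
    have h2 : (∫ t in x..lamO, F t * dA lam) = dA lam * ∫ t in x..lamO, F t := by
      rw [← intervalIntegral.integral_const_mul]; congr 1; ext t; ring
    have h3 : (∫ t in x..lamO, F t) ≤ SF := by
      have hadd := intervalIntegral.integral_add_adjacent_intervals
        (a := lam) (b := x) (c := lamO) (f := F) (μ := MeasureTheory.volume)
        ((hF.mono (by rw [Set.uIcc_of_le hx.1]; exact Set.Icc_subset_Icc le_rfl hx.2)).intervalIntegrable)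
        ((hF.mono hsx).intervalIntegrable)
      have hpos : 0 ≤ ∫ t in lam..x, F t :=
        intervalIntegral.integral_nonneg hx.1
          (fun u hu => hFpos u ⟨hu.1, le_trans hu.2 hx.2⟩)
      rw [hSF, ← hadd]
      linarith
    calc (∫ t in x..lamO, F t * dA t) ≤ dA lam * ∫ t in x..lamO, F t := by
          rw [← h2]; exact h1
      _ ≤ dA lam * SF := mul_le_mul_of_nonneg_left h3 hdApos
  have hJbound : (∫ x in lam..lamO, ∫ t in x..lamO, F t * dA t)
      ≤ dA lam * SF * (lamO - lam) := by
    have := intervalIntegral.integral_mono_on hle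
      ((hKc.mono huIcc.subset)).intervalIntegrable
      (intervalIntegrable_const (μ := MeasureTheory.volume)) hKbound
    rw [intervalIntegral.integral_const, smul_eq_mul] at this
    linarith
  -- combine
  set II : ℝ := ∫ x in lam..lamO, ∫ t in x..lamO, Q t * (H t) ^ 2 with hII
  set X : ℝ := (EO / ((lamO - lam) * H lamO)) * II with hXdef
  set D : ℝ := 1 - dA lam * SF / EO with hDdef
  have hEOLD : EO * (lamO - lam) * D ≤ dA lam := by
    have : EO * (lamO - lam) * D = EO * (lamO - lam) - (lamO - lam) * (dA lam * SF) := by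
      rw [hDdef]; field_simp
    rw [this]
    nlinarith [key2, hJbound]
  have h1X : 0 ≤ 1 + X := by linarith [hX]
  have key1' : (1 - ((1 + z lam) ^ 2)⁻¹) / 2 = H lamO * (EO * (lamO - lam)) * (1 + X) := by
    rw [key1, hXdef]
    field_simp
  rw [key1', le_div_iff₀ hD]
  calc H lamO * (EO * (lamO - lam)) * (1 + X) * D
      = (H lamO * (1 + X)) * (EO * (lamO - lam) * D) := by ring
    _ ≤ (H lamO * (1 + X)) * dA lam :=
        mul_le_mul_of_nonneg_left hEOLD (mul_nonneg hHO.le h1X)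
    _ = H lamO * dA lam * (1 + X) := by ring
end

section
/- (Theorem 2, super-Milne dimming.) Let λ_e ≤ λ_O be reals and E_O > 0. Let z, 𝕳, 𝕼, d_A, F : ℝ → ℝ satisfy on [λ_e, λ_O]: z differentiable with z' = −E_O(1+z)²𝕳, z(λ_O)=0, 1+z > 0; 𝕳 differentiable with 𝕳' = −E_O(1+z)𝕳²(1+𝕼) and 𝕳_O := 𝕳(λ_O) > 0; 𝕼𝕳² continuous; d_A twice continuously differentiable with d_A'' = −F·d_A, F continuous, F ≥ 0, d_A ≥ 0, d_A(λ_O)=0, d_A'(λ_O)=−E_O, and d_A nonincreasing on [λ_e, λ_O]. If λ ∈ [λ_e, λ_O] is such that E_O² · ∫_λ^{λ_O}∫_{λ'}^{λ_O} 𝕼(λ'')𝕳(λ'')² dλ'' dλ' ≤ −𝕳_O · d_A(λ) · (λ_O − λ) · ∫_λ^{λ_O} F(λ') dλ', then 𝕳_O · d_A(λ) ≥ (1/2)·(1 − (1+z(λ))^{−2}); that is, the angular diameter distance at redshift z(λ) is bounded below by that of the Milne universe model. -/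
open intervalIntegral

/-- Theorem 2 of the paper (super-Milne dimming): in a general-relativistic
spacetime obeying the null energy condition, with `𝕳_O > 0`, if the cleared
form of condition (16) holds at `λ`, namely
`E_O² ∫∫ 𝕼𝕳² ≤ −𝕳_O d_A(λ)(λ_O−λ)∫F`, then the angular diameter distance at
redshift `z(λ)` is bounded below by that of the Milne universe model:
`𝕳_O d_A ≥ (1 − (1+z)⁻²)/2`. -/
theorem super_Milne_dimming
    (lamE lamO : ℝ) (hle : lamE ≤ lamO)
    (EO : ℝ) (hEO : 0 < EO)
    (z H Q dA dA' F : ℝ → ℝ)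
    (hz : ∀ lam ∈ Set.Icc lamE lamO,
      HasDerivAt z (-EO * (1 + z lam) ^ 2 * H lam) lam)
    (hzO : z lamO = 0)
    (hzpos : ∀ lam ∈ Set.Icc lamE lamO, 0 < 1 + z lam)
    (hH : ∀ lam ∈ Set.Icc lamE lamO,
      HasDerivAt H (-EO * (1 + z lam) * (H lam) ^ 2 * (1 + Q lam)) lam)
    (hHO : 0 < H lamO)
    (hQH : ContinuousOn (fun lam => Q lam * (H lam) ^ 2) (Set.Icc lamE lamO))
    (hdA : ∀ lam ∈ Set.Icc lamE lamO, HasDerivAt dA (dA' lam) lam)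
    (hfocus : ∀ lam ∈ Set.Icc lamE lamO, HasDerivAt dA' (-(F lam) * dA lam) lam)
    (hF : ContinuousOn F (Set.Icc lamE lamO))
    (hFpos : ∀ lam ∈ Set.Icc lamE lamO, 0 ≤ F lam)
    (hdApos : ∀ lam ∈ Set.Icc lamE lamO, 0 ≤ dA lam)
    (hvertex : dA lamO = 0)
    (hslope : dA' lamO = -EO)
    (hmono : ∀ a ∈ Set.Icc lamE lamO, ∀ b ∈ Set.Icc lamE lamO,
      a ≤ b → dA b ≤ dA a)
    (lam : ℝ) (hlam : lam ∈ Set.Icc lamE lamO)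
    (hcond : EO ^ 2 * ∫ lam' in lam..lamO, ∫ lam'' in lam'..lamO,
        Q lam'' * (H lam'') ^ 2
      ≤ -(H lamO) * dA lam * (lamO - lam) * ∫ lam' in lam..lamO, F lam') :
    H lamO * dA lam ≥ (1 - ((1 + z lam) ^ 2)⁻¹) / 2 := by
  have hlamO : lam ≤ lamO := hlam.2
  have hsub : Set.Icc lam lamO ⊆ Set.Icc lamE lamO := Set.Icc_subset_Icc hlam.1 le_rfl
  have huIcc : Set.uIcc lam lamO = Set.Icc lam lamO := Set.uIcc_of_le hlamO
  -- continuity facts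
  have hzc : ContinuousOn z (Set.Icc lamE lamO) := fun x hx =>
    (hz x hx).continuousAt.continuousWithinAt
  have hHc : ContinuousOn H (Set.Icc lamE lamO) := fun x hx =>
    (hH x hx).continuousAt.continuousWithinAt
  have hdAc : ContinuousOn dA (Set.Icc lamE lamO) := fun x hx =>
    (hdA x hx).continuousAt.continuousWithinAt
  have hdA'c : ContinuousOn dA' (Set.Icc lamE lamO) := fun x hx =>
    (hfocus x hx).continuousAt.continuousWithinAt
  have hFdAc : ContinuousOn (fun u => F u * dA u) (Set.Icc lamE lamO) := hF.mul hdAc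
  -- integrability on subintervals
  have intFdA : ∀ s ∈ Set.Icc lam lamO,
      IntervalIntegrable (fun u => F u * dA u) MeasureTheory.volume s lamO := by
    intro s hs
    apply ContinuousOn.intervalIntegrable
    apply hFdAc.mono
    rw [Set.uIcc_of_le hs.2]
    exact fun x hx => hsub ⟨le_trans hs.1 hx.1, hx.2⟩
  have intQH : ∀ s ∈ Set.Icc lam lamO,
      IntervalIntegrable (fun u => Q u * H u ^ 2) MeasureTheory.volume s lamO := by
    intro s hs
    apply ContinuousOn.intervalIntegrable
    apply hQH.mono
    rw [Set.uIcc_of_le hs.2]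
    exact fun x hx => hsub ⟨le_trans hs.1 hx.1, hx.2⟩
  have intF : ∀ s ∈ Set.Icc lam lamO,
      IntervalIntegrable F MeasureTheory.volume s lamO := by
    intro s hs
    apply ContinuousOn.intervalIntegrable
    apply hF.mono
    rw [Set.uIcc_of_le hs.2]
    exact fun x hx => hsub ⟨le_trans hs.1 hx.1, hx.2⟩
  have intF' : ∀ s ∈ Set.Icc lam lamO,
      IntervalIntegrable F MeasureTheory.volume lam s := by
    intro s hs
    apply ContinuousOn.intervalIntegrable
    apply hF.mono
    rw [Set.uIcc_of_le hs.1]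
    exact fun x hx => hsub ⟨hx.1, le_trans hx.2 hs.2⟩
  -- derivative of s ↦ H s / (1 + z s)
  have hh : ∀ s ∈ Set.Icc lamE lamO,
      HasDerivAt (fun u => H u / (1 + z u)) (-(EO * (Q s * H s ^ 2))) s := by
    intro s hs
    have hne : (1 + z s) ≠ 0 := (hzpos s hs).ne'
    have h1 : HasDerivAt (fun u => 1 + z u) (-EO * (1 + z s) ^ 2 * H s) s :=
      (hz s hs).const_add 1
    have h2 := (hH s hs).div h1 hne
    refine h2.congr_deriv ?_
    field_simp
    ring
  -- derivative of s ↦ (1 - ((1+z s)^2)⁻¹)/2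
  have hg : ∀ s ∈ Set.Icc lamE lamO,
      HasDerivAt (fun u => (1 - ((1 + z u) ^ 2)⁻¹) / 2)
        (-(EO * (H s / (1 + z s)))) s := by
    intro s hs
    have hne : (1 + z s) ≠ 0 := (hzpos s hs).ne'
    have h1 : HasDerivAt (fun u => 1 + z u) (-EO * (1 + z s) ^ 2 * H s) s :=
      (hz s hs).const_add 1
    have h2 := h1.pow 2
    have h3 := h2.inv (pow_ne_zero 2 hne)
    have h4 := (h3.const_sub 1).div_const 2
    refine h4.congr_deriv ?_
    simp only [Pi.pow_apply]
    field_simp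
    ring
  -- dA' formula
  have hdA'f : ∀ s ∈ Set.Icc lam lamO,
      dA' s = -EO + ∫ u in s..lamO, F u * dA u := by
    intro s hs
    have hFTC : ∫ u in s..lamO, -(F u * dA u) = dA' lamO - dA' s := by
      apply intervalIntegral.integral_eq_sub_of_hasDerivAt
      · intro x hx
        rw [Set.uIcc_of_le hs.2] at hx
        have hx' : x ∈ Set.Icc lamE lamO := hsub ⟨le_trans hs.1 hx.1, hx.2⟩
        simpa [neg_mul] using hfocus x hx'
      · exact (intFdA s hs).neg
    rw [intervalIntegral.integral_neg, hslope] at hFTC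
    linarith
  -- H/(1+z) formula
  have hhf : ∀ s ∈ Set.Icc lam lamO,
      H s / (1 + z s) = H lamO + EO * ∫ u in s..lamO, Q u * H u ^ 2 := by
    intro s hs
    have hFTC : ∫ u in s..lamO, -(EO * (Q u * H u ^ 2))
        = H lamO / (1 + z lamO) - H s / (1 + z s) := by
      apply intervalIntegral.integral_eq_sub_of_hasDerivAt
      · intro x hx
        rw [Set.uIcc_of_le hs.2] at hx
        exact hh x (hsub ⟨le_trans hs.1 hx.1, hx.2⟩)
      · exact ((intQH s hs).const_mul EO).neg
    rw [intervalIntegral.integral_neg, intervalIntegral.integral_const_mul,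
      hzO] at hFTC
    norm_num at hFTC
    linarith
  -- integrability of the inner integrals on [lam, lamO]
  have hIOnFdA : MeasureTheory.IntegrableOn (fun u => F u * dA u)
      (Set.uIcc lam lamO) MeasureTheory.volume := by
    rw [huIcc]; exact (hFdAc.mono hsub).integrableOn_Icc
  have hIOnQH : MeasureTheory.IntegrableOn (fun u => Q u * H u ^ 2)
      (Set.uIcc lam lamO) MeasureTheory.volume := by
    rw [huIcc]; exact (hQH.mono hsub).integrableOn_Icc
  have hinnerFc : ContinuousOn (fun s => ∫ u in s..lamO, F u * dA u)
      (Set.Icc lam lamO) := by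
    have := intervalIntegral.continuousOn_primitive_interval_left hIOnFdA
    rwa [huIcc] at this
  have hinnerQc : ContinuousOn (fun s => ∫ u in s..lamO, Q u * H u ^ 2)
      (Set.Icc lam lamO) := by
    have := intervalIntegral.continuousOn_primitive_interval_left hIOnQH
    rwa [huIcc] at this
  have intInnerF : IntervalIntegrable (fun s => ∫ u in s..lamO, F u * dA u)
      MeasureTheory.volume lam lamO := by
    apply ContinuousOn.intervalIntegrable; rwa [huIcc]
  have intInnerQ : IntervalIntegrable (fun s => ∫ u in s..lamO, Q u * H u ^ 2)
      MeasureTheory.volume lam lamO := by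
    apply ContinuousOn.intervalIntegrable; rwa [huIcc]
  -- E1 : dA lam = EO * (lamO - lam) - ∫ innerF
  have E1 : dA lam = EO * (lamO - lam)
      - ∫ s in lam..lamO, ∫ u in s..lamO, F u * dA u := by
    have hFTC : ∫ s in lam..lamO, dA' s = dA lamO - dA lam := by
      apply intervalIntegral.integral_eq_sub_of_hasDerivAt
      · intro x hx
        rw [huIcc] at hx
        exact hdA x (hsub hx)
      · apply ContinuousOn.intervalIntegrable
        rw [huIcc]
        exact hdA'c.mono hsub
    have hcongr : ∫ s in lam..lamO, dA' s
        = ∫ s in lam..lamO, (-EO + ∫ u in s..lamO, F u * dA u) := by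
      apply intervalIntegral.integral_congr
      rw [huIcc]
      exact hdA'f
    rw [hcongr, intervalIntegral.integral_add intervalIntegrable_const intInnerF,
      intervalIntegral.integral_const, hvertex] at hFTC
    simp only [smul_eq_mul] at hFTC
    linarith
  -- E2 : Milne side = EO * H lamO * (lamO - lam) + EO^2 * ∫ innerQ
  have E2 : (1 - ((1 + z lam) ^ 2)⁻¹) / 2
      = EO * H lamO * (lamO - lam)
        + EO ^ 2 * ∫ s in lam..lamO, ∫ u in s..lamO, Q u * H u ^ 2 := by
    have hFTC : ∫ s in lam..lamO, -(EO * (H s / (1 + z s)))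
        = (1 - ((1 + z lamO) ^ 2)⁻¹) / 2 - (1 - ((1 + z lam) ^ 2)⁻¹) / 2 := by
      apply intervalIntegral.integral_eq_sub_of_hasDerivAt
      · intro x hx
        rw [huIcc] at hx
        exact hg x (hsub hx)
      · apply IntervalIntegrable.neg
        apply IntervalIntegrable.const_mul
        apply ContinuousOn.intervalIntegrable
        rw [huIcc]
        exact (hHc.mono hsub).div ((continuousOn_const.add hzc).mono hsub)
          (fun x hx => (hzpos x (hsub hx)).ne')
    have hcongr : ∫ s in lam..lamO, -(EO * (H s / (1 + z s)))
        = ∫ s in lam..lamO,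
            ((-(EO * H lamO)) + (-(EO ^ 2)) * ∫ u in s..lamO, Q u * H u ^ 2) := by
      apply intervalIntegral.integral_congr
      rw [huIcc]
      intro s hs
      show -(EO * (H s / (1 + z s)))
          = -(EO * H lamO) + -EO ^ 2 * ∫ u in s..lamO, Q u * H u ^ 2
      rw [hhf s hs]
      ring
    rw [hcongr, intervalIntegral.integral_add intervalIntegrable_const
        (intInnerQ.const_mul _), intervalIntegral.integral_const,
      intervalIntegral.integral_const_mul, hzO] at hFTC
    simp only [smul_eq_mul] at hFTC
    norm_num at hFTC
    linarith
  -- the key bound : ∫ innerF ≤ dA lam * (lamO-lam) * IF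
  have hpt : ∀ s ∈ Set.Icc lam lamO,
      (∫ u in s..lamO, F u * dA u) ≤ dA lam * ∫ u in lam..lamO, F u := by
    intro s hs
    have h1 : (∫ u in s..lamO, F u * dA u) ≤ ∫ u in s..lamO, F u * dA lam := by
      apply intervalIntegral.integral_mono_on hs.2 (intFdA s hs)
        ((intF s hs).mul_const _)
      intro u hu
      have hu' : u ∈ Set.Icc lamE lamO := hsub ⟨le_trans hs.1 hu.1, hu.2⟩
      exact mul_le_mul_of_nonneg_left
        (hmono lam hlam u hu' (le_trans hs.1 hu.1)) (hFpos u hu')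
    have h2 : (∫ u in s..lamO, F u * dA lam)
        = (∫ u in s..lamO, F u) * dA lam := intervalIntegral.integral_mul_const _ _
    have h3 : (∫ u in s..lamO, F u) ≤ ∫ u in lam..lamO, F u := by
      have hadd : (∫ u in lam..s, F u) + (∫ u in s..lamO, F u)
          = ∫ u in lam..lamO, F u :=
        intervalIntegral.integral_add_adjacent_intervals (intF' s hs) (intF s hs)
      have hnn : 0 ≤ ∫ u in lam..s, F u :=
        intervalIntegral.integral_nonneg hs.1
          (fun u hu => hFpos u (hsub ⟨hu.1, le_trans hu.2 hs.2⟩))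
      linarith
    have h4 : (∫ u in s..lamO, F u) * dA lam
        ≤ (∫ u in lam..lamO, F u) * dA lam :=
      mul_le_mul_of_nonneg_right h3 (hdApos lam hlam)
    calc (∫ u in s..lamO, F u * dA u) ≤ (∫ u in s..lamO, F u) * dA lam := by
          rw [← h2]; exact h1
      _ ≤ (∫ u in lam..lamO, F u) * dA lam := h4
      _ = dA lam * ∫ u in lam..lamO, F u := mul_comm _ _
  have B : (∫ s in lam..lamO, ∫ u in s..lamO, F u * dA u)
      ≤ dA lam * (lamO - lam) * ∫ u in lam..lamO, F u := by
    have hmono' := intervalIntegral.integral_mono_on hlamO intInnerF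
      intervalIntegrable_const hpt
    rw [intervalIntegral.integral_const] at hmono'
    simp only [smul_eq_mul] at hmono'
    calc (∫ s in lam..lamO, ∫ u in s..lamO, F u * dA u)
        ≤ (lamO - lam) * (dA lam * ∫ u in lam..lamO, F u) := hmono'
      _ = dA lam * (lamO - lam) * ∫ u in lam..lamO, F u := by ring
  -- conclude
  have E1' : H lamO * dA lam
      = H lamO * (EO * (lamO - lam)
        - ∫ s in lam..lamO, ∫ u in s..lamO, F u * dA u) := by rw [← E1]
  have hBX : H lamO * (∫ s in lam..lamO, ∫ u in s..lamO, F u * dA u)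
      ≤ H lamO * (dA lam * (lamO - lam) * ∫ u in lam..lamO, F u) :=
    mul_le_mul_of_nonneg_left B hHO.le
  rw [ge_iff_le, E2]
  nlinarith [hcond, hBX, E1']
end

section
/- (Sub-Milne bound under a pointwise strong-energy-type condition; the paper's remark that a model with nonnegative effective deceleration obeys the Milne upper bound.) Let λ_e ≤ λ_O be reals and E_O > 0. Let z, 𝕳, 𝕼, d_A, F : ℝ → ℝ satisfy on [λ_e, λ_O]: z differentiable with z' = −E_O(1+z)²𝕳, z(λ_O)=0, 1+z > 0; 𝕳 differentiable with 𝕳' = −E_O(1+z)𝕳²(1+𝕼) and 𝕳_O := 𝕳(λ_O) > 0; 𝕼𝕳² continuous; d_A twice differentiable with d_A'' = −F·d_A, F ≥ 0, d_A ≥ 0, d_A(λ_O)=0, d_A'(λ_O)=−E_O. If 𝕼(λ) ≥ 0 for all λ ∈ [λ_e, λ_O], then for every λ ∈ [λ_e, λ_O]: 𝕳_O · d_A(λ) ≤ (1/2)·(1 − (1+z(λ))^{−2}). -/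
private lemma sub_Milne_aux1 (a H EO zl : ℝ) (hne : 1 + zl ≠ 0) :
    a + EO * (H * (1 + zl)⁻¹) =
    a - -(-((2:ℕ) * (1 + zl) ^ (2 - 1) * (-EO * (1 + zl) ^ 2 * H)) / ((1 + zl) ^ 2) ^ 2) / 2 := by
  have h2 : (1 + zl) ^ 2 ≠ 0 := pow_ne_zero _ hne
  field_simp
  ring

private lemma sub_Milne_aux2 (HO Fl dAl EO Hl zl Ql : ℝ) (hne : 1 + zl ≠ 0) :
    -(HO * (Fl * dAl)) - EO ^ 2 * (Hl ^ 2 * Ql) =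
    HO * (-Fl * dAl) +
      EO * (-EO * (1 + zl) * Hl ^ 2 * (1 + Ql) * (1 + zl)⁻¹ +
        Hl * (-(-EO * (1 + zl) ^ 2 * Hl) / (1 + zl) ^ 2)) := by
  field_simp
  ring

/-- Sub-Milne bound under a pointwise strong-energy-type condition: if the
effective deceleration parameter satisfies `𝕼 ≥ 0` along the null ray (with
the null energy condition and `𝕳_O > 0`), then the angular diameter distance
obeys the Milne upper bound `𝕳_O d_A ≤ (1 − (1+z)⁻²)/2` at every point of the
ray. -/
theorem sub_Milne_dimming_pointwise
    (lamE lamO : ℝ) (hle : lamE ≤ lamO)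
    (EO : ℝ) (hEO : 0 < EO)
    (z H Q dA dA' F : ℝ → ℝ)
    (hz : ∀ lam ∈ Set.Icc lamE lamO,
      HasDerivAt z (-EO * (1 + z lam) ^ 2 * H lam) lam)
    (hzO : z lamO = 0)
    (hzpos : ∀ lam ∈ Set.Icc lamE lamO, 0 < 1 + z lam)
    (hH : ∀ lam ∈ Set.Icc lamE lamO,
      HasDerivAt H (-EO * (1 + z lam) * (H lam) ^ 2 * (1 + Q lam)) lam)
    (hHO : 0 < H lamO)
    (hQH : ContinuousOn (fun lam => Q lam * (H lam) ^ 2) (Set.Icc lamE lamO))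
    (hdA : ∀ lam ∈ Set.Icc lamE lamO, HasDerivAt dA (dA' lam) lam)
    (hfocus : ∀ lam ∈ Set.Icc lamE lamO, HasDerivAt dA' (-(F lam) * dA lam) lam)
    (hFpos : ∀ lam ∈ Set.Icc lamE lamO, 0 ≤ F lam)
    (hdApos : ∀ lam ∈ Set.Icc lamE lamO, 0 ≤ dA lam)
    (hvertex : dA lamO = 0)
    (hslope : dA' lamO = -EO)
    (hQpos : ∀ lam ∈ Set.Icc lamE lamO, 0 ≤ Q lam) :
    ∀ lam ∈ Set.Icc lamE lamO,
      H lamO * dA lam ≤ (1 - ((1 + z lam) ^ 2)⁻¹) / 2 := by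
  set s := Set.Icc lamE lamO with hs
  have hO : lamO ∈ s := Set.right_mem_Icc.mpr hle
  set G : ℝ → ℝ := fun l => H lamO * dA' l + EO * (H l * (1 + z l)⁻¹) with hGdef
  set g : ℝ → ℝ := fun l => H lamO * dA l - (1 - ((1 + z l) ^ 2)⁻¹) / 2 with hgdef
  -- derivative of g is G
  have hg' : ∀ l ∈ s, HasDerivAt g (G l) l := by
    intro l hl
    have hne : 1 + z l ≠ 0 := (hzpos l hl).ne'
    have h1 : HasDerivAt (fun x => 1 + z x) (-EO * (1 + z l) ^ 2 * H l) l :=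
      (hz l hl).const_add 1
    have h2 := (h1.pow 2).inv (pow_ne_zero 2 hne)
    have h3 := ((h2.const_sub 1).div_const 2)
    have h4 := ((hdA l hl).const_mul (H lamO)).sub h3
    exact h4.congr_deriv (sub_Milne_aux1 _ _ _ _ hne).symm
  -- derivative of G
  have hG' : ∀ l ∈ s, HasDerivAt G
      (-(H lamO * (F l * dA l)) - EO ^ 2 * ((H l) ^ 2 * Q l)) l := by
    intro l hl
    have hne : 1 + z l ≠ 0 := (hzpos l hl).ne'
    have h1 : HasDerivAt (fun x => 1 + z x) (-EO * (1 + z l) ^ 2 * H l) l :=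
      (hz l hl).const_add 1
    have h2 := h1.inv hne
    have h3 := ((hH l hl).mul h2).const_mul EO
    have h4 := ((hfocus l hl).const_mul (H lamO)).add h3
    exact h4.congr_deriv (sub_Milne_aux2 _ _ _ _ _ _ _ hne).symm
  -- G is nonnegative on s
  have hGcont : ContinuousOn G s := fun l hl => (hG' l hl).continuousAt.continuousWithinAt
  have hint : interior s ⊆ s := interior_subset
  have hGanti : AntitoneOn G s := by
    apply antitoneOn_of_deriv_nonpos (convex_Icc _ _) hGcont
    · intro x hx
      exact (hG' x (hint hx)).differentiableAt.differentiableWithinAt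
    · intro x hx
      rw [(hG' x (hint hx)).deriv]
      have h5 := hFpos x (hint hx)
      have h6 := hdApos x (hint hx)
      have h7 := hQpos x (hint hx)
      have h8 : (0:ℝ) ≤ (H x) ^ 2 := sq_nonneg _
      have hA := mul_nonneg hHO.le (mul_nonneg h5 h6)
      have hB := mul_nonneg (sq_nonneg EO) (mul_nonneg h8 h7)
      linarith
  have hGO : G lamO = 0 := by
    simp [hGdef, hslope, hzO]
    ring
  have hGnonneg : ∀ l ∈ s, 0 ≤ G l := by
    intro l hl
    have := hGanti hl hO hl.2
    rw [hGO] at this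
    exact this
  -- g is monotone on s
  have hgmono : MonotoneOn g s := by
    apply monotoneOn_of_deriv_nonneg (convex_Icc _ _)
      (fun l hl => (hg' l hl).continuousAt.continuousWithinAt)
    · intro x hx
      exact (hg' x (hint hx)).differentiableAt.differentiableWithinAt
    · intro x hx
      rw [(hg' x (hint hx)).deriv]
      exact hGnonneg x (hint hx)
  have hgO : g lamO = 0 := by
    simp [hgdef, hvertex, hzO]
  intro lam hlam
  have := hgmono hlam hO hlam.2
  rw [hgO] at this
  have : g lam ≤ 0 := this
  simp only [hgdef] at this
  linarith
end

section
/- (Saturation of the Milne bound.) Let λ ≤ λ_O be reals and E_O > 0. Let z, 𝕳, d_A : ℝ → ℝ satisfy on [λ, λ_O]: z differentiable with z' = −E_O(1+z)²𝕳, z(λ_O)=0, 1+z > 0; 𝕳 differentiable with 𝕳' = −E_O(1+z)𝕳² (i.e., 𝕼 ≡ 0) and 𝕳_O := 𝕳(λ_O) > 0; d_A twice differentiable with d_A'' = 0, d_A(λ_O)=0, d_A'(λ_O)=−E_O. Then d_A(λ) = E_O(λ_O − λ) and 𝕳_O · d_A(λ) = (1/2)·(1 − (1+z(λ))^{−2});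 that is, in the Milne case the distance–redshift relation attains exactly the bound of Theorems 1 and 2. -/
/-- A function with vanishing derivative on `Icc a b` is constant there. -/
lemma const_of_deriv_zero {f : ℝ → ℝ} {a b : ℝ}
    (h : ∀ x ∈ Set.Icc a b, HasDerivAt f 0 x) :
    ∀ x ∈ Set.Icc a b, f x = f a :=
  constant_of_has_deriv_right_zero
    (fun x hx => (h x hx).continuousAt.continuousWithinAt)
    (fun x hx => (h x (Set.Ico_subset_Icc_self hx)).hasDerivWithinAt)

/-- Saturation of the Milne bound: with vanishing effective deceleration
(`𝕼 ≡ 0`, i.e. `𝕳' = −E_O(1+z)𝕳²`) and no focusing (`d_A'' = 0`), the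
distance–redshift relation attains exactly the Milne bound:
`d_A(λ) = E_O(λ_O − λ)` and `𝕳_O d_A(λ) = (1 − (1+z(λ))⁻²)/2`. -/
theorem milne_bound_saturation
    (lam lamO : ℝ) (hle : lam ≤ lamO)
    (EO : ℝ) (hEO : 0 < EO)
    (z H dA dA' : ℝ → ℝ)
    (hz : ∀ lam' ∈ Set.Icc lam lamO,
      HasDerivAt z (-EO * (1 + z lam') ^ 2 * H lam') lam')
    (hzO : z lamO = 0)
    (hzpos : ∀ lam' ∈ Set.Icc lam lamO, 0 < 1 + z lam')
    (hH : ∀ lam' ∈ Set.Icc lam lamO,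
      HasDerivAt H (-EO * (1 + z lam') * (H lam') ^ 2) lam')
    (hHO : 0 < H lamO)
    (hdA : ∀ lam' ∈ Set.Icc lam lamO, HasDerivAt dA (dA' lam') lam')
    (hfocus : ∀ lam' ∈ Set.Icc lam lamO, HasDerivAt dA' 0 lam')
    (hvertex : dA lamO = 0)
    (hslope : dA' lamO = -EO) :
    dA lam = EO * (lamO - lam)
      ∧ H lamO * dA lam = (1 - ((1 + z lam) ^ 2)⁻¹) / 2 := by
  have hmemO : lamO ∈ Set.Icc lam lamO := Set.right_mem_Icc.mpr hle
  have hmemL : lam ∈ Set.Icc lam lamO := Set.left_mem_Icc.mpr hle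
  -- dA' is constant, equal to -EO
  have hdA'const := const_of_deriv_zero hfocus
  have hdA'val : ∀ x ∈ Set.Icc lam lamO, dA' x = -EO := by
    intro x hx
    rw [hdA'const x hx, ← hdA'const lamO hmemO, hslope]
  -- dA x + EO * x is constant
  have hg : ∀ x ∈ Set.Icc lam lamO,
      HasDerivAt (fun y => dA y + EO * y) 0 x := by
    intro x hx
    have := (hdA x hx).add ((hasDerivAt_id x).const_mul EO)
    simp [hdA'val x hx] at this
    exact this
  have hgconst := const_of_deriv_zero hg
  have hdAval : dA lam = EO * (lamO - lam) := by
    have h1 := hgconst lamO hmemO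
    simp only [hvertex] at h1
    linarith
  refine ⟨hdAval, ?_⟩
  -- H/(1+z) is constant
  have hne : ∀ x ∈ Set.Icc lam lamO, (1 + z x) ≠ 0 :=
    fun x hx => ne_of_gt (hzpos x hx)
  have hf : ∀ x ∈ Set.Icc lam lamO,
      HasDerivAt (fun y => H y / (1 + z y)) 0 x := by
    intro x hx
    have hz' : HasDerivAt (fun y => 1 + z y) (-EO * (1 + z x) ^ 2 * H x) x :=
      (hz x hx).const_add 1
    have := (hH x hx).div hz' (hne x hx)
    have heq : (-EO * (1 + z x) * H x ^ 2 * (1 + z x) -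
        H x * (-EO * (1 + z x) ^ 2 * H x)) / (1 + z x) ^ 2 = 0 :=
      div_eq_zero_iff.mpr (Or.inl (by ring))
    rwa [heq] at this
  have hfconst := const_of_deriv_zero hf
  have hHeq : ∀ x ∈ Set.Icc lam lamO, H x = H lamO * (1 + z x) := by
    intro x hx
    have h1 := hfconst x hx
    have h2 := hfconst lamO hmemO
    rw [← h2] at h1
    rw [hzO] at h1
    field_simp at h1
    rw [div_eq_iff (hne x hx)] at h1
    linarith [h1]
  -- w = (1+z)^{-2} - 2 EO H_O x is constant
  have hw : ∀ x ∈ Set.Icc lam lamO,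
      HasDerivAt (fun y => ((1 + z y) ^ 2)⁻¹ - 2 * EO * H lamO * y) 0 x := by
    intro x hx
    have hz' : HasDerivAt (fun y => 1 + z y) (-EO * (1 + z x) ^ 2 * H x) x :=
      (hz x hx).const_add 1
    have hsq : HasDerivAt (fun y => (1 + z y) ^ 2)
        (2 * (1 + z x) * (-EO * (1 + z x) ^ 2 * H x)) x := by
      have := hz'.pow 2
      exact this.congr_deriv (by push_cast; ring)
    have hne2 : (1 + z x) ^ 2 ≠ 0 := pow_ne_zero 2 (hne x hx)
    have hinv := hsq.inv hne2
    have hlin : HasDerivAt (fun y => 2 * EO * H lamO * y) (2 * EO * H lamO) x := by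
      simpa using (hasDerivAt_id x).const_mul (2 * EO * H lamO)
    have := hinv.sub hlin
    have heq : -(2 * (1 + z x) * (-EO * (1 + z x) ^ 2 * H x)) / ((1 + z x) ^ 2) ^ 2
        - 2 * EO * H lamO = 0 := by
      rw [hHeq x hx]
      field_simp [hne x hx]
      ring
    rwa [heq] at this
  have hwconst := const_of_deriv_zero hw
  have h1 := hwconst lamO hmemO
  simp only [hzO] at h1
  norm_num at h1
  rw [hdAval]
  nlinarith [h1]
end
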